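/- Let 0 < H ≤ 1/2, R(s,t) = (1/2)(s^{2H} + t^{2H} - |s-t|^{2H}), and k < l positive integers. Then for any partitions k-1 = s_0 < ... < s_N = k of [k-1,k] and l-1 = t_0 < ... < t_M = l of [l-1,l], one has ∑_{i=1}^N ∑_{j=1}^M |R([s_{i-1},s_i]×[t_{j-1},t_j])|^{1/(2H)} ≤ |ρ_H(l-k)|^{1/(2H)}, where ρ_H(v) = (1/2)(|v+1|^{2H}+|v-1|^{2H}-2|v|^{2H}). -/

import Mathlib

/-- Covariance function of fractional Brownian motion with Hurst parameter `H`. -/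
noncomputable def fbmCov (H s t : ℝ) : ℝ :=
  (1/2) * (s ^ (2*H) + t ^ (2*H) - |s - t| ^ (2*H))

/-- Rectangular increment of a two-variable function. -/
def rectIncr (R : ℝ → ℝ → ℝ) (s s' t t' : ℝ) : ℝ :=
  R s' t' - R s t' - R s' t + R s t

/-- `ρ_H(v) = (1/2)(|v+1|^{2H} + |v-1|^{2H} - 2|v|^{2H})`. -/
noncomputable def rhoH (H v : ℝ) : ℝ :=
  (1/2) * (|v + 1| ^ (2*H) + |v - 1| ^ (2*H) - 2 * |v| ^ (2*H))

lemma two_term {p x y : ℝ} (hp : 1 ≤ p) (hx : 0 ≤ x) (hy : 0 ≤ y) :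
    x ^ p + y ^ p ≤ (x + y) ^ p := by
  have hp0 : 0 < p := lt_of_lt_of_le one_pos hp
  rcases eq_or_lt_of_le (by positivity : (0:ℝ) ≤ x + y) with h | h
  · have hx0 : x = 0 := by linarith
    have hy0 : y = 0 := by linarith
    simp [hx0, hy0, Real.zero_rpow hp0.ne']
  have key : ∀ z : ℝ, 0 ≤ z → z ≤ x + y → z ^ p ≤ z * (x + y) ^ (p - 1) := by
    intro z hz hzle
    rcases eq_or_lt_of_le hz with h0 | h0
    · simp [← h0, Real.zero_rpow hp0.ne']
    calc z ^ p = z ^ (1 + (p - 1)) := by ring_nf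
      _ = z ^ (1:ℝ) * z ^ (p - 1) := Real.rpow_add h0 1 (p-1)
      _ = z * z ^ (p - 1) := by rw [Real.rpow_one]
      _ ≤ z * (x + y) ^ (p - 1) := by
          exact mul_le_mul_of_nonneg_left
            (Real.rpow_le_rpow hz hzle (by linarith)) hz
  have hxk := key x hx (by linarith)
  have hyk := key y hy (by linarith)
  have hxy : (x + y) ^ p = (x + y) * (x + y) ^ (p - 1) := by
    calc (x + y) ^ p = (x + y) ^ (1 + (p - 1)) := by ring_nf
      _ = (x + y) ^ (1:ℝ) * (x + y) ^ (p - 1) := Real.rpow_add h 1 (p-1)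
      _ = (x + y) * (x + y) ^ (p - 1) := by rw [Real.rpow_one]
  rw [hxy]
  nlinarith [hxk, hyk]

lemma sum_rpow_le {ι : Type*} (s : Finset ι) (f : ι → ℝ) {p : ℝ} (hp : 1 ≤ p)
    (hf : ∀ i ∈ s, 0 ≤ f i) : ∑ i ∈ s, f i ^ p ≤ (∑ i ∈ s, f i) ^ p := by
  have hp0 : 0 < p := lt_of_lt_of_le one_pos hp
  induction s using Finset.cons_induction with
  | empty => simp [Real.zero_rpow hp0.ne']
  | cons a s ha ih =>
    rw [Finset.sum_cons, Finset.sum_cons]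
    have h1 : ∀ i ∈ s, 0 ≤ f i := fun i hi => hf i (Finset.mem_cons_of_mem hi)
    calc f a ^ p + ∑ i ∈ s, f i ^ p ≤ f a ^ p + (∑ i ∈ s, f i) ^ p := by
          exact add_le_add le_rfl (ih h1)
      _ ≤ (f a + ∑ i ∈ s, f i) ^ p :=
          two_term hp (hf a (Finset.mem_cons_self a s)) (Finset.sum_nonneg h1)

lemma concave_four {α u x h : ℝ} (h0 : 0 < α) (h1 : α ≤ 1)
    (hu : 0 ≤ u) (hux : u ≤ x) (hh : 0 ≤ h) :
    (x + h) ^ α + u ^ α ≤ x ^ α + (u + h) ^ α := by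
  rcases eq_or_lt_of_le hux with rfl | hlt
  · linarith
  have hD : 0 < x + h - u := by linarith
  set lam : ℝ := (x - u) / (x + h - u) with hlam
  set mu : ℝ := h / (x + h - u) with hmu
  have hla : 0 ≤ lam := div_nonneg (by linarith) hD.le
  have hmb : 0 ≤ mu := div_nonneg hh hD.le
  have hab : lam + mu = 1 := by rw [hlam, hmu]; field_simp; ring
  have C := Real.concaveOn_rpow h0.le h1
  have m1 : u ∈ Set.Ici (0:ℝ) := hu
  have m2 : x + h ∈ Set.Ici (0:ℝ) := by exact Set.mem_Ici.mpr (by linarith)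
  have c1 := C.2 m1 m2 hla hmb hab
  have c2 := C.2 m1 m2 hmb hla (by linarith)
  have e1 : lam • u + mu • (x + h) = u + h := by
    rw [smul_eq_mul, smul_eq_mul, hlam, hmu]; field_simp; ring
  have e2 : mu • u + lam • (x + h) = x := by
    rw [smul_eq_mul, smul_eq_mul, hlam, hmu]; field_simp; ring
  rw [e1] at c1
  rw [e2] at c2
  simp only [smul_eq_mul] at c1 c2
  calc (x + h) ^ α + u ^ α = (lam + mu) * (u ^ α + (x + h) ^ α) := by
        rw [hab]; ring
    _ = (lam * u ^ α + mu * (x + h) ^ α) + (mu * u ^ α + lam * (x + h) ^ α) := by ring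
    _ ≤ (u + h) ^ α + x ^ α := add_le_add c1 c2
    _ = x ^ α + (u + h) ^ α := by ring

lemma rectIncr_fbmCov {H a b c d : ℝ} (hab : a ≤ b) (hbc : b ≤ c) (hcd : c ≤ d) :
    rectIncr (fbmCov H) a b c d
      = (1/2) * ((d-a)^(2*H) + (c-b)^(2*H) - (d-b)^(2*H) - (c-a)^(2*H)) := by
  unfold rectIncr fbmCov
  rw [abs_of_nonpos (by linarith : b - d ≤ 0), abs_of_nonpos (by linarith : a - d ≤ 0),
    abs_of_nonpos (by linarith : b - c ≤ 0), abs_of_nonpos (by linarith : a - c ≤ 0),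
    neg_sub, neg_sub, neg_sub, neg_sub]
  ring

lemma rectIncr_nonpos {H a b c d : ℝ} (hH0 : 0 < H) (hH : H ≤ 1/2)
    (hab : a ≤ b) (hbc : b ≤ c) (hcd : c ≤ d) :
    rectIncr (fbmCov H) a b c d ≤ 0 := by
  rw [rectIncr_fbmCov hab hbc hcd]
  have h4 := concave_four (α := 2*H) (u := c - b) (x := d - b) (h := b - a)
    (by linarith) (by linarith) (by linarith) (by linarith) (by linarith)
  rw [show d - b + (b - a) = d - a from by ring,
      show c - b + (b - a) = c - a from by ring] at h4
  linarith

lemma fin_telescope {n : ℕ} (g : Fin (n+1) → ℝ) :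
    ∑ i : Fin n, (g i.succ - g i.castSucc) = g (Fin.last n) - g 0 := by
  induction n with
  | zero => simp [Fin.last]
  | succ n ih =>
    rw [Fin.sum_univ_castSucc]
    have h := ih (fun i => g i.castSucc)
    simp only [← Fin.succ_castSucc] at h
    rw [h]
    have h1 : (Fin.last n).succ = Fin.last (n+1) := Fin.succ_last n
    have h2 : ((0 : Fin (n+1)).castSucc) = 0 := rfl
    rw [h1, h2]
    ring

/-- For `0 < H ≤ 1/2` and positive integers `k < l`: for any partitions of
`[k-1,k]` and `[l-1,l]`, the sum of the `1/(2H)`-powers of the absolute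
rectangular increments of the fBm covariance is bounded by
`|ρ_H(l-k)|^{1/(2H)}`. -/
theorem fbmCov_variation_offdiagonal (H : ℝ) (hH0 : 0 < H) (hH : H ≤ 1/2)
    (k l : ℕ) (hk : 1 ≤ k) (hkl : k < l) (N M : ℕ)
    (s : Fin (N+1) → ℝ) (t : Fin (M+1) → ℝ)
    (hsmono : Monotone s) (htmono : Monotone t)
    (hs0 : s 0 = (k : ℝ) - 1) (hsN : s (Fin.last N) = (k : ℝ))
    (ht0 : t 0 = (l : ℝ) - 1) (htM : t (Fin.last M) = (l : ℝ)) :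
    ∑ i : Fin N, ∑ j : Fin M,
      |rectIncr (fbmCov H) (s i.castSucc) (s i.succ) (t j.castSucc) (t j.succ)|
        ^ (1/(2*H))
      ≤ |rhoH H ((l : ℝ) - (k : ℝ))| ^ (1/(2*H)) := by
  have h2H : 0 < 2*H := by linarith
  have hp1 : (1:ℝ) ≤ 1/(2*H) := by rw [le_div_iff₀ h2H]; linarith
  have hkR : (1:ℝ) ≤ (k:ℝ) := by exact_mod_cast hk
  have hklR : (k:ℝ) + 1 ≤ (l:ℝ) := by exact_mod_cast hkl
  -- bounds on partition points
  have hsle : ∀ i, s i ≤ (k:ℝ) := fun i => hsN ▸ hsmono (Fin.le_last i)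
  have hsge : ∀ i, (k:ℝ) - 1 ≤ s i := fun i => hs0 ▸ hsmono (Fin.zero_le i)
  have htle : ∀ j, t j ≤ (l:ℝ) := fun j => htM ▸ htmono (Fin.le_last j)
  have htge : ∀ j, (l:ℝ) - 1 ≤ t j := fun j => ht0 ▸ htmono (Fin.zero_le j)
  -- each rectangle increment is nonpositive
  have hA : ∀ (i : Fin N) (j : Fin M),
      rectIncr (fbmCov H) (s i.castSucc) (s i.succ) (t j.castSucc) (t j.succ) ≤ 0 := by
    intro i j
    exact rectIncr_nonpos hH0 hH (hsmono i.castSucc_le_succ)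
      (by have := hsle i.succ; have := htge j.castSucc; linarith)
      (htmono j.castSucc_le_succ)
  -- telescoping: total sum equals the big rectangle increment
  have inner : ∀ a b : ℝ,
      ∑ j : Fin M, rectIncr (fbmCov H) a b (t j.castSucc) (t j.succ)
        = rectIncr (fbmCov H) a b (t 0) (t (Fin.last M)) := by
    intro a b
    have h := fin_telescope (fun j => fbmCov H b (t j) - fbmCov H a (t j))
    calc ∑ j : Fin M, rectIncr (fbmCov H) a b (t j.castSucc) (t j.succ)
        = ∑ j : Fin M, ((fun j => fbmCov H b (t j) - fbmCov H a (t j)) j.succ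
            - (fun j => fbmCov H b (t j) - fbmCov H a (t j)) j.castSucc) := by
          refine Finset.sum_congr rfl fun j _ => ?_
          simp only [rectIncr]; ring
      _ = _ := by rw [h]; simp only [rectIncr]; ring
  have total : ∑ i : Fin N, ∑ j : Fin M,
      rectIncr (fbmCov H) (s i.castSucc) (s i.succ) (t j.castSucc) (t j.succ)
        = rectIncr (fbmCov H) (s 0) (s (Fin.last N)) (t 0) (t (Fin.last M)) := by
    have h := fin_telescope (fun i => fbmCov H (s i) (t (Fin.last M)) - fbmCov H (s i) (t 0))
    calc ∑ i : Fin N, ∑ j : Fin M,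
        rectIncr (fbmCov H) (s i.castSucc) (s i.succ) (t j.castSucc) (t j.succ)
        = ∑ i : Fin N, ((fun i => fbmCov H (s i) (t (Fin.last M)) - fbmCov H (s i) (t 0)) i.succ
            - (fun i => fbmCov H (s i) (t (Fin.last M)) - fbmCov H (s i) (t 0)) i.castSucc) := by
          refine Finset.sum_congr rfl fun i _ => ?_
          rw [inner]
          simp only [rectIncr]; ring
      _ = _ := by rw [h]; simp only [rectIncr]; ring
  rw [hs0, hsN, ht0, htM] at total
  -- value of the big rectangle increment
  have hval : rectIncr (fbmCov H) ((k:ℝ) - 1) (k:ℝ) ((l:ℝ) - 1) (l:ℝ)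
      = rhoH H ((l:ℝ) - (k:ℝ)) := by
    rw [rectIncr_fbmCov (by linarith) (by linarith) (by linarith)]
    rw [show (l:ℝ) - ((k:ℝ) - 1) = ((l:ℝ) - (k:ℝ)) + 1 from by ring,
        show (l:ℝ) - 1 - (k:ℝ) = ((l:ℝ) - (k:ℝ)) - 1 from by ring,
        show (l:ℝ) - 1 - ((k:ℝ) - 1) = (l:ℝ) - (k:ℝ) from by ring]
    unfold rhoH
    rw [abs_of_nonneg (by linarith : (0:ℝ) ≤ (l:ℝ) - (k:ℝ) + 1),
        abs_of_nonneg (by linarith : (0:ℝ) ≤ (l:ℝ) - (k:ℝ) - 1),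
        abs_of_nonneg (by linarith : (0:ℝ) ≤ (l:ℝ) - (k:ℝ))]
    ring
  rw [hval] at total
  -- sum of absolute values
  have habs : ∑ i : Fin N, ∑ j : Fin M,
      |rectIncr (fbmCov H) (s i.castSucc) (s i.succ) (t j.castSucc) (t j.succ)|
        = |rhoH H ((l:ℝ) - (k:ℝ))| := by
    have hsum : ∑ i : Fin N, ∑ j : Fin M,
        |rectIncr (fbmCov H) (s i.castSucc) (s i.succ) (t j.castSucc) (t j.succ)|
        = - rhoH H ((l:ℝ) - (k:ℝ)) := by
      rw [← total, ← Finset.sum_neg_distrib]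
      refine Finset.sum_congr rfl fun i _ => ?_
      rw [← Finset.sum_neg_distrib]
      exact Finset.sum_congr rfl fun j _ => abs_of_nonpos (hA i j)
    have hrho : rhoH H ((l:ℝ) - (k:ℝ)) ≤ 0 := by
      rw [← total]
      exact Finset.sum_nonpos fun i _ => Finset.sum_nonpos fun j _ => hA i j
    rw [hsum, abs_of_nonpos hrho]
  -- final chain
  calc ∑ i : Fin N, ∑ j : Fin M,
      |rectIncr (fbmCov H) (s i.castSucc) (s i.succ) (t j.castSucc) (t j.succ)| ^ (1/(2*H))
      ≤ ∑ i : Fin N, (∑ j : Fin M,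
          |rectIncr (fbmCov H) (s i.castSucc) (s i.succ) (t j.castSucc) (t j.succ)|) ^ (1/(2*H)) := by
        refine Finset.sum_le_sum fun i _ => ?_
        exact sum_rpow_le _ _ hp1 fun j _ => abs_nonneg _
    _ ≤ (∑ i : Fin N, ∑ j : Fin M,
          |rectIncr (fbmCov H) (s i.castSucc) (s i.succ) (t j.castSucc) (t j.succ)|) ^ (1/(2*H)) :=
        sum_rpow_le _ _ hp1 fun i _ => Finset.sum_nonneg fun j _ => abs_nonneg _
    _ = |rhoH H ((l:ℝ) - (k:ℝ))| ^ (1/(2*H)) := by rw [habs]
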